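/- Let (Ω, ℱ, (ℱ_n)_{n=0}^N, μ) be a filtered probability space, S_n ≥ 0 adapted and μ-integrable with (1−ε) S_n ≤ E^μ[S_N | ℱ_n] ≤ (1+ε) S_n for all n ≤ N and some ε ≥ 0, and let h_n be ℱ_{n−1}-measurable with h_0 = 0. Define Y_n := Σ_{k=1}^n [(h_k − h_{k−1})(S̃_n − S_{k−1}) − ε|h_k − h_{k−1}| S_{k−1}] where S̃_n := E^μ[S_N | ℱ_n]. If E^μ[Y_N⁻] < ∞, then E^μ[Y_N] ≤ 0; i.e., the terminal gains with proportional transaction costs have nonpositive expectation under any consistent price system. -/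

import Mathlib

set_option autoImplicit false

open MeasureTheory Filter Topology ENNReal

/-- Under a consistent price system with proportional transaction costs
(`(1−ε)S_n ≤ E[S_N|ℱ_n] ≤ (1+ε)S_n`), the terminal trading gains
`Y_N = Σ_{k=1}^N [(h_k − h_{k−1})(S̃_N − S_{k−1}) − ε|h_k − h_{k−1}| S_{k−1}]`
of a predictable strategy with `h_0 = 0` satisfy `E[Y_N] ≤ 0`, provided
`E[Y_N⁻] < ∞`. -/
lemma ofReal_max_neg (x : ℝ) : ENNReal.ofReal (max (-x) 0) = ENNReal.ofReal (-x) := by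
  rcases le_total 0 x with hx | hx
  · rw [max_eq_right (by linarith), ENNReal.ofReal_zero,
      Eq.comm, ENNReal.ofReal_eq_zero]
    linarith
  · rw [max_eq_left (by linarith)]

lemma transform_int {Ω : Type*} {m0 : MeasurableSpace Ω} (μ : Measure Ω)
    [IsProbabilityMeasure μ] (ℱ : Filtration ℕ m0)
    (M : ℕ → Ω → ℝ) (hM_adapted : Adapted ℱ M) (hM_int : ∀ n, Integrable (M n) μ)
    (hM_mart : ∀ n, μ[M (n + 1) | ℱ n] =ᵐ[μ] M n)
    (H : ℕ → Ω → ℝ) (hH : ∀ n, StronglyMeasurable[ℱ n] (H n)) :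
    ∀ n, (∫⁻ ω, ENNReal.ofReal (-(∑ j ∈ Finset.range n, H j ω * (M (j + 1) ω - M j ω))) ∂μ < ⊤) →
      Integrable (fun ω => ∑ j ∈ Finset.range n, H j ω * (M (j + 1) ω - M j ω)) μ ∧
      ∫ ω, (∑ j ∈ Finset.range n, H j ω * (M (j + 1) ω - M j ω)) ∂μ = 0 := by
  intro n
  induction n with
  | zero => intro _; simp
  | succ n ih =>
    intro hneg
    set f : Ω → ℝ := fun ω => ∑ j ∈ Finset.range n, H j ω * (M (j + 1) ω - M j ω) with hf_def
    set g : Ω → ℝ := H n with hg_def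
    set d : Ω → ℝ := fun ω => M (n + 1) ω - M n ω with hd_def
    set W : Ω → ℝ := fun ω => ∑ j ∈ Finset.range (n + 1), H j ω * (M (j + 1) ω - M j ω)
      with hW_def
    have hWfgd : ∀ ω, W ω = f ω + g ω * d ω := by
      intro ω; rw [hW_def]; simp only [Finset.sum_range_succ]; rfl
    -- strong measurability w.r.t. ℱ n
    have hf_meas : StronglyMeasurable[ℱ n] f := by
      apply Finset.stronglyMeasurable_fun_sum
      intro j hj
      have hj' : j < n := Finset.mem_range.mp hj
      exact ((hH j).mono (ℱ.mono hj'.le)).mul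
        (((hM_adapted (j + 1)).stronglyMeasurable.mono (ℱ.mono hj')).sub ((hM_adapted j).stronglyMeasurable.mono (ℱ.mono hj'.le)))
    have hg_meas : StronglyMeasurable[ℱ n] g := hH n
    have hd_int : Integrable d μ := (hM_int (n + 1)).sub (hM_int n)
    have hd_ce : μ[d | ℱ n] =ᵐ[μ] 0 := by
      have h1 : μ[d | ℱ n] =ᵐ[μ] μ[M (n + 1) | ℱ n] - μ[M n | ℱ n] :=
        condExp_sub (hM_int (n + 1)) (hM_int n) _
      have h2 : μ[M n | ℱ n] = M n :=
        condExp_of_stronglyMeasurable (ℱ.le n) (hM_adapted n).stronglyMeasurable (hM_int n)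
      filter_upwards [h1, hM_mart n] with ω hω hω2
      simp [hω, h2, hω2, Pi.sub_apply]
    -- the partition
    set ψ : Ω → ℕ := fun ω => ⌊max |f ω| |g ω|⌋₊ with hψ_def
    have hψ_meas : Measurable[ℱ n] ψ := by
      have h1 : StronglyMeasurable[ℱ n] fun ω => max |f ω| |g ω| :=
        (continuous_abs.comp continuous_fst).max (continuous_abs.comp continuous_snd)
          |>.comp_stronglyMeasurable (hf_meas.prodMk hg_meas)
      exact Nat.measurable_floor.comp h1.measurable
    set C : ℕ → Set Ω := fun m => ψ ⁻¹' {m} with hC_def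
    have hC_measF : ∀ m, MeasurableSet[ℱ n] (C m) := fun m =>
      hψ_meas (measurableSet_singleton m)
    have hC_meas : ∀ m, MeasurableSet (C m) := fun m => ℱ.le n _ (hC_measF m)
    have hC_disj : Pairwise (Function.onFun Disjoint C) := by
      intro i j hij
      simp only [Function.onFun, Set.disjoint_left]
      intro ω hi hj
      exact hij (hi.symm.trans hj)
    have hC_union : (⋃ m, C m) = Set.univ := by
      ext ω; simp only [Set.mem_iUnion, Set.mem_univ, iff_true]
      exact ⟨ψ ω, rfl⟩
    have hC_bound : ∀ m ω, ω ∈ C m → |f ω| ≤ m + 1 ∧ |g ω| ≤ m + 1 := by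
      intro m ω hω
      have h1 : max |f ω| |g ω| < m + 1 := by
        have := Nat.lt_floor_add_one (max |f ω| |g ω|)
        rwa [show ⌊max |f ω| |g ω|⌋₊ = m from hω] at this
      exact ⟨(le_max_left _ _).trans h1.le, (le_max_right _ _).trans h1.le⟩
    -- indicator functions
    set fI : ℕ → Ω → ℝ := fun m => (C m).indicator f with hfI_def
    set gdI : ℕ → Ω → ℝ := fun m => (C m).indicator (fun ω => g ω * d ω) with hgdI_def
    set WI : ℕ → Ω → ℝ := fun m => (C m).indicator W with hWI_def
    have hWI_eq : ∀ m ω, WI m ω = fI m ω + gdI m ω := by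
      intro m ω
      by_cases hω : ω ∈ C m <;>
        simp [hWI_def, hfI_def, hgdI_def, Set.indicator, hω, hWfgd ω]
    have hfI_meas : ∀ m, StronglyMeasurable[ℱ n] (fI m) := fun m =>
      hf_meas.indicator (hC_measF m)
    have hfI_int : ∀ m, Integrable (fI m) μ := by
      intro m
      refine Integrable.mono' (integrable_const ((m : ℝ) + 1))
        ((hfI_meas m).mono (ℱ.le n)).aestronglyMeasurable (ae_of_all _ fun ω => ?_)
      by_cases hω : ω ∈ C m
      · simp only [hfI_def, Set.indicator_of_mem hω, Real.norm_eq_abs]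
        exact (hC_bound m ω hω).1
      · simp only [hfI_def, Set.indicator_of_notMem hω, norm_zero]
        positivity
    have hgdI_eq : ∀ m, gdI m = fun ω => ((C m).indicator g ω) * d ω := by
      intro m; funext ω
      by_cases hω : ω ∈ C m <;> simp [hgdI_def, Set.indicator, hω]
    have hgdI_int : ∀ m, Integrable (gdI m) μ := by
      intro m
      rw [hgdI_eq m]
      exact hd_int.bdd_mul
        ((hg_meas.indicator (hC_measF m)).mono (ℱ.le n)).aestronglyMeasurable
        (c := (m : ℝ) + 1) (ae_of_all _ fun ω => by
          by_cases hω : ω ∈ C m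
          · simp only [Set.indicator_of_mem hω, Real.norm_eq_abs]
            exact (hC_bound m ω hω).2
          · simp only [Set.indicator_of_notMem hω, norm_zero]; positivity)
    have hWI_int : ∀ m, Integrable (WI m) μ := by
      intro m
      have : WI m = fun ω => fI m ω + gdI m ω := funext (hWI_eq m)
      rw [this]; exact (hfI_int m).add (hgdI_int m)
    -- conditional expectation identity
    have hce : ∀ m, μ[WI m | ℱ n] =ᵐ[μ] fI m := by
      intro m
      have e1 : WI m = fI m + gdI m := funext fun ω => hWI_eq m ω
      have e2 : μ[WI m | ℱ n] =ᵐ[μ] μ[fI m | ℱ n] + μ[gdI m | ℱ n] := by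
        rw [e1]; exact condExp_add (hfI_int m) (hgdI_int m) _
      have e3 : μ[fI m | ℱ n] = fI m :=
        condExp_of_stronglyMeasurable (ℱ.le n) (hfI_meas m) (hfI_int m)
      have e4 : μ[gdI m | ℱ n] =ᵐ[μ] 0 := by
        have hmulint : Integrable ((C m).indicator g * d) μ := by
          have : ((C m).indicator g * d) = gdI m := by
            rw [hgdI_eq m]; rfl
          rw [this]; exact hgdI_int m
        have hpull := condExp_mul_of_stronglyMeasurable_left (μ := μ)
          (hg_meas.indicator (hC_measF m)) hmulint hd_int
        rw [hgdI_eq m]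
        have : (fun ω => ((C m).indicator g ω) * d ω) = (C m).indicator g * d := rfl
        rw [this]
        refine hpull.trans ?_
        filter_upwards [hd_ce] with ω hω
        simp [Pi.mul_apply, hω]
      filter_upwards [e2, e4] with ω h2 h4
      rw [h2, Pi.add_apply, h4, e3]
      simp
    have hint_eq : ∀ m, ∫ ω, WI m ω ∂μ = ∫ ω, fI m ω ∂μ := by
      intro m
      rw [← integral_condExp (ℱ.le n) (f := WI m)]
      exact integral_congr_ae (hce m)

    -- measurability of W
    have hW_meas : StronglyMeasurable W := by
      apply Finset.stronglyMeasurable_fun_sum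
      intro j _
      exact ((hH j).mono (ℱ.le j)).mul
        (((hM_adapted (j + 1)).stronglyMeasurable.mono (ℱ.le (j + 1))).sub ((hM_adapted j).stronglyMeasurable.mono (ℱ.le j)))
    -- negative and positive parts of W
    set Wneg : Ω → ℝ := fun ω => max (-(W ω)) 0 with hWneg_def
    set Wpos : Ω → ℝ := fun ω => max (W ω) 0 with hWpos_def
    have hWneg_nonneg : ∀ ω, 0 ≤ Wneg ω := fun ω => le_max_right _ _
    have hWpos_nonneg : ∀ ω, 0 ≤ Wpos ω := fun ω => le_max_right _ _
    have hWneg_meas : StronglyMeasurable Wneg :=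
      ((continuous_neg.max continuous_const).comp_stronglyMeasurable hW_meas)
    have hWneg_ofReal : ∀ ω, ENNReal.ofReal (Wneg ω) = ENNReal.ofReal (-(W ω)) := fun ω =>
      ofReal_max_neg (W ω)
    have hWneg_int : Integrable Wneg μ := by
      refine ⟨hWneg_meas.aestronglyMeasurable, ?_⟩
      have : ∀ ω, ‖Wneg ω‖ₑ = ENNReal.ofReal (-(W ω)) := fun ω => by
        rw [Real.enorm_eq_ofReal (hWneg_nonneg ω), hWneg_ofReal ω]
      simpa [HasFiniteIntegral, this] using hneg
    -- control of the negative part of f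
    have hkey : ∀ m, (∫⁻ ω in C m, ENNReal.ofReal (-(f ω)) ∂μ)
        ≤ ∫⁻ ω in C m, ENNReal.ofReal (Wneg ω) ∂μ := by
      intro m
      set WnegI : Ω → ℝ := (C m).indicator Wneg with hWnegI_def
      have hWnegI_int : Integrable WnegI μ := hWneg_int.indicator (hC_meas m)
      have hmono : (fun ω => -(WnegI ω)) ≤ᵐ[μ] WI m := by
        refine ae_of_all _ fun ω => ?_
        by_cases hω : ω ∈ C m
        · simp only [hWnegI_def, hWI_def, Set.indicator_of_mem hω]
          have : -(W ω) ≤ Wneg ω := le_max_left _ _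
          linarith
        · simp [hWnegI_def, hWI_def, Set.indicator_of_notMem hω]
      have hce2 : -μ[WnegI | ℱ n] ≤ᵐ[μ] fI m := by
        have h1 : μ[fun ω => -(WnegI ω) | ℱ n] ≤ᵐ[μ] μ[WI m | ℱ n] :=
          condExp_mono hWnegI_int.neg (hWI_int m) hmono
        have h2 : μ[fun ω => -(WnegI ω) | ℱ n] =ᵐ[μ] -μ[WnegI | ℱ n] := condExp_neg WnegI (ℱ n)
        filter_upwards [h1, h2, hce m] with ω e1 e2 e3
        rw [← e3, ← e2]; exact e1
      have hce_nn : 0 ≤ᵐ[μ] μ[WnegI | ℱ n] :=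
        condExp_nonneg (ae_of_all _ fun ω => Set.indicator_nonneg (fun x _ => hWneg_nonneg x) ω)
      have hptwise : ∀ᵐ ω ∂μ, ENNReal.ofReal (-(fI m ω)) ≤ ENNReal.ofReal ((μ[WnegI | ℱ n]) ω) := by
        filter_upwards [hce2, hce_nn] with ω e1 e2
        apply ENNReal.ofReal_le_ofReal
        have : -(fI m ω) ≤ (μ[WnegI | ℱ n]) ω := by
          have := e1; simp only [Pi.neg_apply] at this; linarith
        exact this
      calc ∫⁻ ω in C m, ENNReal.ofReal (-(f ω)) ∂μ
          = ∫⁻ ω, ENNReal.ofReal (-(fI m ω)) ∂μ := by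
            rw [← lintegral_indicator (hC_meas m)]
            congr 1; funext ω
            by_cases hω : ω ∈ C m <;>
              simp [hfI_def, Set.indicator, hω]
        _ ≤ ∫⁻ ω, ENNReal.ofReal ((μ[WnegI | ℱ n]) ω) ∂μ := lintegral_mono_ae hptwise
        _ = ENNReal.ofReal (∫ ω, (μ[WnegI | ℱ n]) ω ∂μ) :=
            (ofReal_integral_eq_lintegral_ofReal integrable_condExp hce_nn).symm
        _ = ENNReal.ofReal (∫ ω, WnegI ω ∂μ) := by rw [integral_condExp (ℱ.le n)]
        _ = ∫⁻ ω, ENNReal.ofReal (WnegI ω) ∂μ :=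
            ofReal_integral_eq_lintegral_ofReal hWnegI_int
              (ae_of_all _ fun ω => Set.indicator_nonneg (fun x _ => hWneg_nonneg x) ω)
        _ = ∫⁻ ω in C m, ENNReal.ofReal (Wneg ω) ∂μ := by
            rw [← lintegral_indicator (hC_meas m)]
            congr 1; funext ω
            by_cases hω : ω ∈ C m <;> simp [hWnegI_def, Set.indicator, hω]
    have hWneg_lint : ∫⁻ ω, ENNReal.ofReal (Wneg ω) ∂μ < ⊤ := by
      calc ∫⁻ ω, ENNReal.ofReal (Wneg ω) ∂μ
          = ∫⁻ ω, ENNReal.ofReal (-(W ω)) ∂μ := by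
            congr 1; funext ω; exact hWneg_ofReal ω
        _ < ⊤ := hneg
    have hneg_f : ∫⁻ ω, ENNReal.ofReal (-(f ω)) ∂μ < ⊤ := by
      have e1 : ∫⁻ ω, ENNReal.ofReal (-(f ω)) ∂μ
          = ∑' m, ∫⁻ ω in C m, ENNReal.ofReal (-(f ω)) ∂μ := by
        rw [← lintegral_iUnion hC_meas hC_disj, hC_union, Measure.restrict_univ]
      have e2 : ∫⁻ ω, ENNReal.ofReal (Wneg ω) ∂μ
          = ∑' m, ∫⁻ ω in C m, ENNReal.ofReal (Wneg ω) ∂μ := by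
        rw [← lintegral_iUnion hC_meas hC_disj, hC_union, Measure.restrict_univ]
      rw [e1]
      calc ∑' m, ∫⁻ ω in C m, ENNReal.ofReal (-(f ω)) ∂μ
          ≤ ∑' m, ∫⁻ ω in C m, ENNReal.ofReal (Wneg ω) ∂μ := ENNReal.tsum_le_tsum hkey
        _ = ∫⁻ ω, ENNReal.ofReal (Wneg ω) ∂μ := e2.symm
        _ < ⊤ := hWneg_lint
    obtain ⟨hf_int, hf_integral⟩ := ih hneg_f
    -- control of the positive part of W
    have hWposI_eq : ∀ m, (C m).indicator Wpos = fun ω => WI m ω + (C m).indicator Wneg ω := by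
      intro m; funext ω
      by_cases hω : ω ∈ C m
      · simp only [Set.indicator_of_mem hω, hWI_def, hWpos_def, hWneg_def]
        rcases le_total 0 (W ω) with hw | hw
        · rw [max_eq_left hw, max_eq_right (by linarith)]; ring
        · rw [max_eq_right hw, max_eq_left (by linarith)]; ring
      · simp [Set.indicator_of_notMem hω, hWI_def]
    have hWposI_int : ∀ m, Integrable ((C m).indicator Wpos) μ := by
      intro m; rw [hWposI_eq m]
      exact (hWI_int m).add (hWneg_int.indicator (hC_meas m))
    have hpos_key : ∀ m, (∫⁻ ω in C m, ENNReal.ofReal (Wpos ω) ∂μ)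
        ≤ (∫⁻ ω in C m, ENNReal.ofReal |f ω| ∂μ) + ∫⁻ ω in C m, ENNReal.ofReal (Wneg ω) ∂μ := by
      intro m
      have hfabsI_int : Integrable ((C m).indicator fun ω => |f ω|) μ := by
        have : ((C m).indicator fun ω => |f ω|) = fun ω => |fI m ω| := by
          funext ω; by_cases hω : ω ∈ C m <;> simp [hfI_def, Set.indicator, hω]
        rw [this]; exact (hfI_int m).abs
      have hintW : ∫ ω, (C m).indicator Wpos ω ∂μ
          = ∫ ω, fI m ω ∂μ + ∫ ω, (C m).indicator Wneg ω ∂μ := by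
        rw [hWposI_eq m, integral_add (hWI_int m) (hWneg_int.indicator (hC_meas m)), hint_eq m]
      have hle : ∫ ω, (C m).indicator Wpos ω ∂μ
          ≤ ∫ ω, (C m).indicator (fun ω => |f ω|) ω ∂μ + ∫ ω, (C m).indicator Wneg ω ∂μ := by
        rw [hintW]
        have h1 : ∫ ω, fI m ω ∂μ ≤ ∫ ω, (C m).indicator (fun ω => |f ω|) ω ∂μ := by
          apply integral_mono (hfI_int m) hfabsI_int
          intro ω
          by_cases hω : ω ∈ C m <;> simp [hfI_def, Set.indicator, hω, le_abs_self]
        linarith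
      calc ∫⁻ ω in C m, ENNReal.ofReal (Wpos ω) ∂μ
          = ∫⁻ ω, ENNReal.ofReal ((C m).indicator Wpos ω) ∂μ := by
            rw [← lintegral_indicator (hC_meas m)]
            congr 1; funext ω
            by_cases hω : ω ∈ C m <;> simp [Set.indicator, hω]
        _ = ENNReal.ofReal (∫ ω, (C m).indicator Wpos ω ∂μ) :=
            (ofReal_integral_eq_lintegral_ofReal (hWposI_int m)
              (ae_of_all _ fun ω => Set.indicator_nonneg (fun x _ => hWpos_nonneg x) ω)).symm
        _ ≤ ENNReal.ofReal (∫ ω, (C m).indicator (fun ω => |f ω|) ω ∂μ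
              + ∫ ω, (C m).indicator Wneg ω ∂μ) := ENNReal.ofReal_le_ofReal hle
        _ ≤ ENNReal.ofReal (∫ ω, (C m).indicator (fun ω => |f ω|) ω ∂μ)
              + ENNReal.ofReal (∫ ω, (C m).indicator Wneg ω ∂μ) := ENNReal.ofReal_add_le
        _ = (∫⁻ ω in C m, ENNReal.ofReal |f ω| ∂μ) + ∫⁻ ω in C m, ENNReal.ofReal (Wneg ω) ∂μ := by
            rw [ofReal_integral_eq_lintegral_ofReal hfabsI_int
                (ae_of_all _ fun ω => Set.indicator_nonneg (fun x _ => abs_nonneg _) ω),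
              ofReal_integral_eq_lintegral_ofReal (hWneg_int.indicator (hC_meas m))
                (ae_of_all _ fun ω => Set.indicator_nonneg (fun x _ => hWneg_nonneg x) ω)]
            congr 1 <;>
            · rw [← lintegral_indicator (hC_meas m)]
              congr 1; funext ω
              by_cases hω : ω ∈ C m <;> simp [Set.indicator, hω]
    have hfabs_lint : ∫⁻ ω, ENNReal.ofReal |f ω| ∂μ < ⊤ := by
      have := hf_int.2
      simpa [HasFiniteIntegral, Real.enorm_eq_ofReal_abs] using this
    have hWpos_lint : ∫⁻ ω, ENNReal.ofReal (Wpos ω) ∂μ < ⊤ := by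
      have e1 : ∫⁻ ω, ENNReal.ofReal (Wpos ω) ∂μ
          = ∑' m, ∫⁻ ω in C m, ENNReal.ofReal (Wpos ω) ∂μ := by
        rw [← lintegral_iUnion hC_meas hC_disj, hC_union, Measure.restrict_univ]
      rw [e1]
      calc ∑' m, ∫⁻ ω in C m, ENNReal.ofReal (Wpos ω) ∂μ
          ≤ ∑' m, ((∫⁻ ω in C m, ENNReal.ofReal |f ω| ∂μ)
              + ∫⁻ ω in C m, ENNReal.ofReal (Wneg ω) ∂μ) := ENNReal.tsum_le_tsum hpos_key
        _ = (∑' m, ∫⁻ ω in C m, ENNReal.ofReal |f ω| ∂μ)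
              + ∑' m, ∫⁻ ω in C m, ENNReal.ofReal (Wneg ω) ∂μ := ENNReal.tsum_add
        _ = (∫⁻ ω, ENNReal.ofReal |f ω| ∂μ) + ∫⁻ ω, ENNReal.ofReal (Wneg ω) ∂μ := by
            rw [← lintegral_iUnion hC_meas hC_disj, hC_union, Measure.restrict_univ,
              ← lintegral_iUnion hC_meas hC_disj, hC_union, Measure.restrict_univ]
        _ < ⊤ := ENNReal.add_lt_top.mpr ⟨hfabs_lint, hWneg_lint⟩
    -- integrability of W
    have hW_int : Integrable W μ := by
      refine ⟨hW_meas.aestronglyMeasurable, ?_⟩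
      have habs : ∀ ω, ‖W ω‖ₑ = ENNReal.ofReal (Wpos ω) + ENNReal.ofReal (Wneg ω) := by
        intro ω
        rw [Real.enorm_eq_ofReal_abs, ← ENNReal.ofReal_add (hWpos_nonneg ω) (hWneg_nonneg ω)]
        congr 1
        rcases le_total 0 (W ω) with hw | hw
        · rw [abs_of_nonneg hw, hWpos_def, hWneg_def]
          simp only [max_eq_left hw, max_eq_right (by linarith : -(W ω) ≤ 0)]
          ring
        · rw [abs_of_nonpos hw, hWpos_def, hWneg_def]
          simp only [max_eq_right hw, max_eq_left (by linarith : (0:ℝ) ≤ -(W ω))]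
          ring
      have hmeas_pos : Measurable fun ω => ENNReal.ofReal (Wpos ω) :=
        ENNReal.measurable_ofReal.comp
          ((continuous_id.max continuous_const).comp_stronglyMeasurable hW_meas).measurable
      simp only [HasFiniteIntegral, habs]
      rw [lintegral_add_left hmeas_pos]
      exact ENNReal.add_lt_top.mpr ⟨hWpos_lint, hWneg_lint⟩
    -- the integral of W vanishes
    have hW_integral : ∫ ω, W ω ∂μ = 0 := by
      have e1 : ∫ ω, W ω ∂μ = ∑' m, ∫ ω in C m, W ω ∂μ := by
        rw [← setIntegral_univ, ← hC_union]
        exact integral_iUnion hC_meas hC_disj (hC_union ▸ hW_int.integrableOn)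
      have e2 : ∫ ω, f ω ∂μ = ∑' m, ∫ ω in C m, f ω ∂μ := by
        rw [← setIntegral_univ, ← hC_union]
        exact integral_iUnion hC_meas hC_disj (hC_union ▸ hf_int.integrableOn)
      have e3 : ∀ m, ∫ ω in C m, W ω ∂μ = ∫ ω in C m, f ω ∂μ := by
        intro m
        rw [← integral_indicator (hC_meas m), ← integral_indicator (hC_meas m)]
        exact hint_eq m
      rw [e1]
      calc ∑' m, ∫ ω in C m, W ω ∂μ = ∑' m, ∫ ω in C m, f ω ∂μ := tsum_congr e3
        _ = ∫ ω, f ω ∂μ := e2.symm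
        _ = 0 := hf_integral
    exact ⟨hW_int, hW_integral⟩

lemma abel_identity (a b : ℕ → ℝ) (ha0 : a 0 = 0) (N : ℕ) :
    ∑ k ∈ Finset.range N, (a (k + 1) - a k) * (b N - b k) =
      ∑ j ∈ Finset.range N, a (j + 1) * (b (j + 1) - b j) := by
  induction N with
  | zero => simp
  | succ n ih =>
    rw [Finset.sum_range_succ, Finset.sum_range_succ, ← ih]
    have tel : ∑ k ∈ Finset.range n, (a (k + 1) - a k) = a n - a 0 :=
      Finset.sum_range_sub a n
    have expand : ∑ k ∈ Finset.range n, (a (k + 1) - a k) * (b (n + 1) - b k)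
        = ∑ k ∈ Finset.range n, ((a (k + 1) - a k) * (b n - b k)
            + (a (k + 1) - a k) * (b (n + 1) - b n)) := by
      apply Finset.sum_congr rfl; intro k _; ring
    rw [expand, Finset.sum_add_distrib, ← Finset.sum_mul, tel, ha0]
    ring


set_option maxHeartbeats 1000000 in
theorem stmt16 {Ω : Type*} {m0 : MeasurableSpace Ω} (μ : Measure Ω)
    [IsProbabilityMeasure μ] (ℱ : Filtration ℕ m0) (N : ℕ) (ε : ℝ) (hε : 0 ≤ ε)
    (S : ℕ → Ω → ℝ) (hS_adapted : Adapted ℱ S) (hS_int : ∀ n, Integrable (S n) μ)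
    (hS_nonneg : ∀ n ω, 0 ≤ S n ω)
    (hcps : ∀ n ≤ N, (∀ᵐ ω ∂μ, (1 - ε) * S n ω ≤ (μ[S N | ℱ n]) ω) ∧
      ∀ᵐ ω ∂μ, (μ[S N | ℱ n]) ω ≤ (1 + ε) * S n ω)
    (h : ℕ → Ω → ℝ) (h0 : ∀ ω, h 0 ω = 0)
    (hpred : ∀ n, StronglyMeasurable[ℱ n] (h (n + 1)))
    (Y : Ω → ℝ)
    (hY : Y = fun ω => ∑ k ∈ Finset.range N,
      ((h (k + 1) ω - h k ω) * ((μ[S N | ℱ N]) ω - S k ω) -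
        ε * |h (k + 1) ω - h k ω| * S k ω))
    (hint : (∫⁻ ω, ENNReal.ofReal (-(Y ω)) ∂μ) < ⊤) :
    Integrable Y μ ∧ (∫ ω, Y ω ∂μ) ≤ 0 := by
  classical
  -- the martingale S̃ n = E[S_N | ℱ n]
  have hSt_mart : ∀ n, μ[(fun ω => (μ[S N | ℱ (n + 1)]) ω) | ℱ n] =ᵐ[μ] fun ω => (μ[S N | ℱ n]) ω :=
    fun n => condExp_condExp_of_le (ℱ.mono (Nat.le_succ n)) (ℱ.le (n + 1))
  -- the martingale transform part
  set X : Ω → ℝ := fun ω => ∑ j ∈ Finset.range N,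
      h (j + 1) ω * ((μ[S N | ℱ (j + 1)]) ω - (μ[S N | ℱ j]) ω) with hX_def
  -- pointwise decomposition Y = X + D
  have hYX : ∀ ω, Y ω = X ω + ∑ k ∈ Finset.range N,
      ((h (k + 1) ω - h k ω) * ((μ[S N | ℱ k]) ω - S k ω) -
        ε * |h (k + 1) ω - h k ω| * S k ω) := by
    intro ω
    simp only [hY, hX_def]
    rw [← abel_identity (fun k => h k ω) (fun k => (μ[S N | ℱ k]) ω) (h0 ω) N,
      ← Finset.sum_add_distrib]
    apply Finset.sum_congr rfl
    intro k _
    ring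
  -- the drift part is a.e. nonpositive
  have hD_le : ∀ᵐ ω ∂μ, (∑ k ∈ Finset.range N,
      ((h (k + 1) ω - h k ω) * ((μ[S N | ℱ k]) ω - S k ω) -
        ε * |h (k + 1) ω - h k ω| * S k ω)) ≤ 0 := by
    have hterm : ∀ᵐ ω ∂μ, ∀ k, k < N →
        (h (k + 1) ω - h k ω) * ((μ[S N | ℱ k]) ω - S k ω) -
          ε * |h (k + 1) ω - h k ω| * S k ω ≤ 0 := by
      rw [ae_all_iff]
      intro k
      by_cases hk : k < N
      · obtain ⟨hc1, hc2⟩ := hcps k hk.le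
        filter_upwards [hc1, hc2] with ω c1 c2 _
        have habs : |(μ[S N | ℱ k]) ω - S k ω| ≤ ε * S k ω := by
          rw [abs_le]; constructor <;> nlinarith [hS_nonneg k ω]
        have h1 : (h (k + 1) ω - h k ω) * ((μ[S N | ℱ k]) ω - S k ω)
            ≤ |h (k + 1) ω - h k ω| * (ε * S k ω) := by
          calc (h (k + 1) ω - h k ω) * ((μ[S N | ℱ k]) ω - S k ω)
              ≤ |(h (k + 1) ω - h k ω) * ((μ[S N | ℱ k]) ω - S k ω)| := le_abs_self _
            _ = |h (k + 1) ω - h k ω| * |(μ[S N | ℱ k]) ω - S k ω| := abs_mul _ _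
            _ ≤ |h (k + 1) ω - h k ω| * (ε * S k ω) :=
                mul_le_mul_of_nonneg_left habs (abs_nonneg _)
        nlinarith
      · exact ae_of_all _ fun ω hk' => absurd hk' hk
    filter_upwards [hterm] with ω hω
    apply Finset.sum_nonpos
    intro k hk
    exact hω k (Finset.mem_range.mp hk)
  have hYleX : ∀ᵐ ω ∂μ, Y ω ≤ X ω := by
    filter_upwards [hD_le] with ω hω
    rw [hYX ω]
    linarith
  -- X has integrable negative part
  have hXneg : ∫⁻ ω, ENNReal.ofReal (-(X ω)) ∂μ < ⊤ := by
    refine lt_of_le_of_lt (lintegral_mono_ae ?_) hint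
    filter_upwards [hYleX] with ω hω
    exact ENNReal.ofReal_le_ofReal (by linarith)
  -- apply the martingale transform lemma
  obtain ⟨hX_int, hX_integral⟩ := transform_int μ ℱ (fun n => μ[S N | ℱ n])
    (fun n => stronglyMeasurable_condExp.measurable) (fun n => integrable_condExp) hSt_mart
    (fun j => h (j + 1)) (fun n => hpred n) N hXneg
  -- measurability of Y
  have hh_meas : ∀ k, StronglyMeasurable (h k) := by
    intro k
    cases k with
    | zero =>
      have : h 0 = fun _ => (0 : ℝ) := funext h0
      rw [this]; exact stronglyMeasurable_const
    | succ k => exact (hpred k).mono (ℱ.le k)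
  have hY_meas : StronglyMeasurable Y := by
    rw [hY]
    apply Finset.stronglyMeasurable_fun_sum
    intro k _
    have hd : StronglyMeasurable (fun ω => h (k + 1) ω - h k ω) :=
      (hh_meas (k + 1)).sub (hh_meas k)
    have habs : StronglyMeasurable (fun ω => |h (k + 1) ω - h k ω|) :=
      continuous_abs.comp_stronglyMeasurable hd
    exact (hd.mul ((stronglyMeasurable_condExp.mono (ℱ.le N)).sub
        ((hS_adapted k).stronglyMeasurable.mono (ℱ.le k)))).sub
      ((stronglyMeasurable_const.mul habs).mul ((hS_adapted k).stronglyMeasurable.mono (ℱ.le k)))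
  -- integrability of Y
  have hYneg_int : Integrable (fun ω => max (-(Y ω)) 0) μ := by
    refine ⟨((continuous_neg.max continuous_const).comp_stronglyMeasurable
      hY_meas).aestronglyMeasurable, ?_⟩
    have heq : ∀ ω, ‖max (-(Y ω)) 0‖ₑ = ENNReal.ofReal (-(Y ω)) := fun ω => by
      rw [Real.enorm_eq_ofReal (le_max_right _ _), ofReal_max_neg]
    simpa [HasFiniteIntegral, heq] using hint
  have hXpos_int : Integrable (fun ω => max (X ω) 0) μ := hX_int.pos_part
  have hY_int : Integrable Y μ := by
    refine Integrable.mono' (hXpos_int.add hYneg_int) hY_meas.aestronglyMeasurable ?_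
    filter_upwards [hYleX] with ω hω
    rw [Real.norm_eq_abs]
    simp only [Pi.add_apply]
    rcases le_total 0 (Y ω) with hy | hy
    · rw [abs_of_nonneg hy]
      have h1 : X ω ≤ max (X ω) 0 := le_max_left _ _
      have h2 : (0:ℝ) ≤ max (-(Y ω)) 0 := le_max_right _ _
      linarith
    · rw [abs_of_nonpos hy]
      have h1 : (0:ℝ) ≤ max (X ω) 0 := le_max_right _ _
      have h2 : -(Y ω) ≤ max (-(Y ω)) 0 := le_max_left _ _
      linarith
  refine ⟨hY_int, ?_⟩
  calc ∫ ω, Y ω ∂μ ≤ ∫ ω, X ω ∂μ := integral_mono_ae hY_int hX_int hYleX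
    _ = 0 := hX_integral
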